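/- Let g be the mass function of a sum of n-1 independent Bernoulli variables (parameters in (0,1)), alpha_k = g(k-1)/(g(k-1)+g(k)) with alpha_0 = 0, alpha_n = 1, beta_k = alpha_k - 1/2, and A_p(k) = prod_{j=0}^{p-1} alpha_{k-j} (with A_0(k)=1 and A_p(k)=0 if p >= k+1). Then for any function v defined on {p,...,n-1} and any p >= 0: sum_{k=p}^{n-1} g(k) A_p(k) v(k) (beta_{k+1} + beta_{k-p}) = sum_{k=p+1}^{n-1} g(k) A_{p+1}(k) (v(k) - v(k-1)). -/

import Mathlib

/-- Mass function of a Poisson--binomial random variable with parameters `p`,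
extended to `ℤ` (zero outside `{0,...,n}`). -/
noncomputable def pb {n : ℕ} (p : Fin n → ℝ) (k : ℤ) : ℝ :=
  if k < 0 then 0
  else ∑ S ∈ Finset.powersetCard k.toNat (Finset.univ : Finset (Fin n)),
    (∏ i ∈ S, p i) * ∏ i ∈ Sᶜ, (1 - p i)

lemma pb_pos {n : ℕ} (p : Fin n → ℝ) (hp : ∀ i, p i ∈ Set.Ioo (0 : ℝ) 1)
    (k : ℤ) (hk0 : 0 ≤ k) (hkn : k ≤ (n : ℤ)) : 0 < pb p k := by
  rw [pb, if_neg (not_lt.mpr hk0)]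
  apply Finset.sum_pos
  · intro S hS
    apply mul_pos
    · exact Finset.prod_pos fun i _ => (hp i).1
    · exact Finset.prod_pos fun i _ => by linarith [(hp i).2]
  · apply Finset.powersetCard_nonempty.mpr
    simp only [Finset.card_univ, Fintype.card_fin]
    exact Int.toNat_le.mpr hkn

lemma pb_zero_top {n : ℕ} (p : Fin n → ℝ) : pb p ((n : ℤ) + 1) = 0 := by
  rw [pb, if_neg (by omega)]
  have h2 : ((n : ℤ) + 1).toNat = n + 1 := by omega
  rw [h2, Finset.powersetCard_eq_empty.mpr (by simp), Finset.sum_empty]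

theorem stmt15 (m : ℕ) (q : Fin m → ℝ)
    (hq : ∀ i, q i ∈ Set.Ioo (0 : ℝ) 1)
    (g : ℤ → ℝ) (hg : g = pb q)
    (α : ℤ → ℝ)
    (hα : ∀ k : ℤ, 1 ≤ k → k ≤ (m : ℤ) → α k = g (k - 1) / (g (k - 1) + g k))
    (hα0 : ∀ k : ℤ, k ≤ 0 → α k = 0) (hαn : ∀ k : ℤ, (m : ℤ) + 1 ≤ k → α k = 1)
    (β : ℤ → ℝ) (hβ : ∀ k, β k = α k - 1 / 2)
    (A : ℕ → ℤ → ℝ) (hA : ∀ p k, A p k = ∏ j ∈ Finset.range p, α (k - j)) :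
    ∀ (p : ℕ) (v : ℤ → ℝ),
      ∑ k ∈ Finset.Icc (p : ℤ) (m : ℤ),
          g k * A p k * v k * (β (k + 1) + β (k - p)) =
        ∑ k ∈ Finset.Icc ((p : ℤ) + 1) (m : ℤ),
          g k * A (p + 1) k * (v k - v (k - 1)) := by
  have gpos : ∀ k : ℤ, 0 ≤ k → k ≤ (m : ℤ) → 0 < g k := by
    intro k h1 h2; rw [hg]; exact pb_pos q hq k h1 h2
  have gtop : g ((m : ℤ) + 1) = 0 := by rw [hg]; exact pb_zero_top q
  -- key discrete relation
  have key : ∀ k : ℤ, 0 ≤ k → k ≤ (m : ℤ) → g k * (α (k + 1) - 1) = -(α (k + 1) * g (k + 1)) := by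
    intro k h1 h2
    rcases lt_or_eq_of_le h2 with h | h
    · have hk1 : k + 1 ≤ (m : ℤ) := h
      rw [hα (k + 1) (by linarith) hk1]
      have e1 : k + 1 - 1 = k := by ring
      rw [e1]
      have hgk : 0 < g k := gpos k h1 h2
      have hgk1 : 0 < g (k + 1) := gpos (k + 1) (by linarith) hk1
      have hd : g k + g (k + 1) ≠ 0 := by linarith
      field_simp
      ring
    · rw [h, hαn ((m : ℤ) + 1) le_rfl, gtop]
      ring
  intro p v
  have Astep : ∀ k : ℤ, A (p + 1) k = A p k * α (k - p) := by
    intro k; rw [hA, hA, Finset.prod_range_succ]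
  have Astep' : ∀ k : ℤ, A (p + 1) k = α k * A p (k - 1) := by
    intro k
    rw [hA, hA, Finset.prod_range_succ']
    rw [mul_comm]
    congr 1
    · norm_num
    · apply Finset.prod_congr rfl
      intro j _
      congr 1
      push_cast
      ring
  have step1 :
      ∑ k ∈ Finset.Icc (p : ℤ) (m : ℤ), g k * A p k * v k * (β (k + 1) + β (k - p)) =
        (∑ k ∈ Finset.Icc (p : ℤ) (m : ℤ), g k * A (p + 1) k * v k) -
          ∑ k ∈ Finset.Icc (p : ℤ) (m : ℤ), α (k + 1) * g (k + 1) * A p k * v k := by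
    rw [← Finset.sum_sub_distrib]
    apply Finset.sum_congr rfl
    intro k hk
    obtain ⟨h1, h2⟩ := Finset.mem_Icc.mp hk
    have h0 : (0 : ℤ) ≤ k := le_trans (Int.ofNat_nonneg p) h1
    rw [hβ, hβ, Astep]
    linear_combination (A p k * v k) * key k h0 h2
  rw [step1]
  -- first sum: drop the k = p term (it vanishes)
  have sum1 : ∑ k ∈ Finset.Icc (p : ℤ) (m : ℤ), g k * A (p + 1) k * v k =
      ∑ k ∈ Finset.Icc ((p : ℤ) + 1) (m : ℤ), g k * A (p + 1) k * v k := by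
    symm
    apply Finset.sum_subset
    · intro x hx
      obtain ⟨h1, h2⟩ := Finset.mem_Icc.mp hx
      exact Finset.mem_Icc.mpr ⟨by linarith, h2⟩
    · intro x hx hx'
      obtain ⟨h1, h2⟩ := Finset.mem_Icc.mp hx
      have hxp : x = (p : ℤ) := by
        rcases lt_or_eq_of_le h1 with h | h
        · exact absurd (Finset.mem_Icc.mpr ⟨h, h2⟩) hx'
        · omega
      subst hxp
      have : A (p + 1) (p : ℤ) = 0 := by
        rw [hA]
        apply Finset.prod_eq_zero (Finset.self_mem_range_succ p)
        rw [sub_self]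
        exact hα0 0 le_rfl
      rw [this]; ring
  -- second sum: reindex k ↦ k + 1
  have sum2 : ∑ k ∈ Finset.Icc (p : ℤ) (m : ℤ), α (k + 1) * g (k + 1) * A p k * v k =
      ∑ k ∈ Finset.Icc ((p : ℤ) + 1) (m : ℤ), g k * A (p + 1) k * v (k - 1) := by
    have hmap : Finset.Icc ((p : ℤ) + 1) ((m : ℤ) + 1) =
        Finset.map (addRightEmbedding 1) (Finset.Icc (p : ℤ) (m : ℤ)) := by
      rw [Finset.map_add_right_Icc]
    have e1 : ∑ k ∈ Finset.Icc ((p : ℤ) + 1) ((m : ℤ) + 1),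
        α k * g k * A p (k - 1) * v (k - 1) =
        ∑ k ∈ Finset.Icc (p : ℤ) (m : ℤ), α (k + 1) * g (k + 1) * A p k * v k := by
      rw [hmap, Finset.sum_map]
      apply Finset.sum_congr rfl
      intro k _
      simp [addRightEmbedding]
    rw [← e1]
    have e2 : ∑ k ∈ Finset.Icc ((p : ℤ) + 1) ((m : ℤ) + 1),
        α k * g k * A p (k - 1) * v (k - 1) =
        ∑ k ∈ Finset.Icc ((p : ℤ) + 1) (m : ℤ), α k * g k * A p (k - 1) * v (k - 1) := by
      symm
      apply Finset.sum_subset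
      · intro x hx
        obtain ⟨h1, h2⟩ := Finset.mem_Icc.mp hx
        exact Finset.mem_Icc.mpr ⟨h1, by linarith⟩
      · intro x hx hx'
        obtain ⟨h1, h2⟩ := Finset.mem_Icc.mp hx
        have hxm : x = (m : ℤ) + 1 := by
          by_contra h
          exact hx' (Finset.mem_Icc.mpr ⟨h1, by omega⟩)
        subst hxm
        rw [gtop]; ring
    rw [e2]
    apply Finset.sum_congr rfl
    intro k _
    rw [Astep']
    ring
  rw [sum1, sum2, ← Finset.sum_sub_distrib]
  apply Finset.sum_congr rfl
  intro k _
  ring
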